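/- In ℝ with the relation x ⊥ y iff x·y ∈ ℚ, the map T defined by T(x) = 0 if x is irrational and T(x) = x/3 if x is rational satisfies: for all x, y with x ⊥ y, |Tx − Ty| ≤ (1/3)·|x − y| (T is a Banach ⊥-contraction), but T is not a Banach contraction on ℝ (there exist x, y with |Tx − Ty| > k|x − y| for every k < 1). -/

import Mathlib

open Classical in
theorem banach_perp_contraction_not_contraction :
    (let T : ℝ → ℝ := fun x => if Irrational x then 0 else x / 3
     (∀ x y : ℝ, (∃ q : ℚ, x * y = (q : ℝ)) → |T x - T y| ≤ (1/3) * |x - y|) ∧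
     ∀ k : ℝ, k < 1 → ∃ x y : ℝ, |T x - T y| > k * |x - y|) := by
  intro T
  constructor
  · rintro x y ⟨q, hq⟩
    by_cases hx : Irrational x <;> by_cases hy : Irrational y
    · simp only [T, if_pos hx, if_pos hy]
      simp
    · -- x irrational, y rational; then y = 0
      obtain ⟨r, hr⟩ := not_not.mp hy
      rcases eq_or_ne r 0 with h0 | h0
      · have hy0 : y = 0 := by rw [← hr, h0]; simp
        simp only [T, if_pos hx, if_neg hy]
        simp [hy0]
      · exfalso
        apply hx
        have hyne : (r : ℝ) ≠ 0 := by exact_mod_cast h0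
        rw [← hr] at hq
        refine ⟨q / r, ?_⟩
        push_cast
        field_simp
        linear_combination -hq
    · obtain ⟨r, hr⟩ := not_not.mp hx
      rcases eq_or_ne r 0 with h0 | h0
      · have hx0 : x = 0 := by rw [← hr, h0]; simp
        simp only [T, if_neg hx, if_pos hy]
        simp [hx0]
      · exfalso
        apply hy
        have hxne : (r : ℝ) ≠ 0 := by exact_mod_cast h0
        rw [← hr] at hq
        refine ⟨q / r, ?_⟩
        push_cast
        field_simp
        linear_combination -hq
    · simp only [T, if_neg hx, if_neg hy]
      rw [div_sub_div_same, abs_div]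
      simp
      rw [div_le_iff₀ (by norm_num : (0:ℝ) < 3)]
      ring_nf
      nlinarith [abs_nonneg (x - y)]
  · intro k hk
    refine ⟨3 + Real.sqrt 2 / 2, 3, ?_⟩
    have hirr : Irrational (3 + Real.sqrt 2 / 2) := by
      have h2 : Irrational (Real.sqrt 2 / 2) := by
        have := irrational_sqrt_two
        simpa using this.div_natCast (by norm_num : (2:ℕ) ≠ 0)
      simpa using h2.natCast_add 3
    have h3 : ¬ Irrational (3 : ℝ) := by
      rw [show (3:ℝ) = ((3:ℚ):ℝ) by norm_num]
      exact Rat.not_irrational 3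
    simp only [T, if_pos hirr, if_neg h3]
    have hs : Real.sqrt 2 < 2 := by
      nlinarith [Real.sq_sqrt (by norm_num : (2:ℝ) ≥ 0), Real.sqrt_nonneg 2]
    have hs0 : 0 < Real.sqrt 2 := Real.sqrt_pos.mpr (by norm_num)
    have habs : |3 + Real.sqrt 2 / 2 - 3| = Real.sqrt 2 / 2 := by
      rw [abs_of_pos (by linarith)]
      ring
    rw [habs]
    have : k * (Real.sqrt 2 / 2) < 1 := by nlinarith
    calc k * (Real.sqrt 2 / 2) < 1 := this
    _ = |(0:ℝ) - 3/3| := by norm_num
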